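/- Let G be a finite group and let H and H' be subgroups of G that are Gassmann equivalent in G. Then the normal cores of H and H' in G coincide: ⋂_{σ ∈ G} σ⁻¹Hσ = ⋂_{σ ∈ G} σ⁻¹H'σ. Consequently, if G = Gal(N/F) for a finite Galois extension N/F and H = Gal(N/K), H' = Gal(N/L) for intermediate fields K, L, then K and L have the same Galois closure over F inside N. -/

import Mathlib

/-- Two subgroups `H` and `H'` of a group `G` are Gassmann equivalent if every
`g : G` is conjugate to the same number of elements of `H` as of `H'`. -/
def IsGassmannEquiv {G : Type*} [Group G] (H H' : Subgroup G) : Prop :=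
  ∀ g : G, Nat.card {h : H // IsConj g (h : G)} = Nat.card {h : H' // IsConj g (h : G)}

private lemma gassmann_core_le {G : Type*} [Group G] [Finite G] {H H' : Subgroup G}
    (hG : IsGassmannEquiv H H') : H.normalCore ≤ H'.normalCore := by
  intro g hg
  have hg' : ∀ b : G, b * g * b⁻¹ ∈ H := hg
  -- the conjugacy class of g
  set C := {y : G // IsConj g y} with hC
  have hcard : Nat.card {h : H // IsConj g (h : G)} = Nat.card C :=
    Nat.card_eq_of_bijective (fun h => (⟨(h.1 : G), h.2⟩ : C))
      ⟨fun a b hab => by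
        beta_reduce at hab
        rw [Subtype.mk.injEq] at hab
        exact Subtype.ext (Subtype.ext hab), by
        rintro ⟨y, hy⟩
        obtain ⟨c, hc⟩ := isConj_iff.mp hy
        have hyH : y ∈ H := hc ▸ hg' c
        exact ⟨⟨⟨y, hyH⟩, hy⟩, rfl⟩⟩
  have hcard' : Nat.card {h : H' // IsConj g (h : G)} = Nat.card C := by
    rw [← hG g, hcard]
  have hf'bij : Function.Bijective (fun h : {h : H' // IsConj g (h : G)} => (⟨(h.1 : G), h.2⟩ : C)) :=
    (Nat.bijective_iff_injective_and_card _).mpr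
      ⟨fun a b hab => by
        beta_reduce at hab
        rw [Subtype.mk.injEq] at hab
        exact Subtype.ext (Subtype.ext hab), hcard'⟩
  intro b
  obtain ⟨⟨⟨y, hyH'⟩, _⟩, hfy⟩ := hf'bij.2 ⟨b * g * b⁻¹, isConj_iff.mpr ⟨b, rfl⟩⟩
  have : y = b * g * b⁻¹ := congrArg Subtype.val hfy
  exact this ▸ hyH'

private lemma normalCore_eq_of_gassmann {G : Type*} [Group G] [Finite G] {H H' : Subgroup G}
    (hG : IsGassmannEquiv H H') : H.normalCore = H'.normalCore :=
  le_antisymm (gassmann_core_le hG) (gassmann_core_le fun g => (hG g).symm)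

private lemma iInf_conj_eq_normalCore {G : Type*} [Group G] (H : Subgroup G) :
    (⨅ σ : G, Subgroup.map (MulEquiv.toMonoidHom (MulAut.conj σ)) H) = H.normalCore := by
  ext g
  simp only [Subgroup.mem_iInf, Subgroup.mem_map]
  constructor
  · intro h b
    obtain ⟨x, hxH, hx⟩ := h b⁻¹
    have : x = b * g * b⁻¹ := by
      have : b⁻¹ * x * b⁻¹⁻¹ = g := hx
      rw [← this]; group
    exact this ▸ hxH
  · intro h σ
    exact ⟨σ⁻¹ * g * σ⁻¹⁻¹, h σ⁻¹, by simp [MulAut.conj_apply]; group⟩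

open IntermediateField in
private lemma fixingSubgroup_iSup {F N : Type*} [Field F] [Field N] [Algebra F N]
    {ι : Sort*} (E : ι → IntermediateField F N) :
    (⨆ i, E i).fixingSubgroup = ⨅ i, (E i).fixingSubgroup := by
  refine le_antisymm (le_iInf fun i => fixingSubgroup_antitone (le_iSup E i)) ?_
  exact (IntermediateField.le_iff_le _ _).mp
    (iSup_le fun i => (IntermediateField.le_iff_le _ _).mpr (iInf_le _ i))

open Pointwise in
private lemma conj_smul_eq_map {G : Type*} [Group G] (σ : G) (H : Subgroup G) :
    (MulAut.conj σ) • H = Subgroup.map (MulEquiv.toMonoidHom (MulAut.conj σ)) H := by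
  ext g
  simp [Subgroup.mem_pointwise_smul_iff_inv_smul_mem, Subgroup.mem_map]
  constructor
  · intro h
    exact ⟨σ⁻¹ * g * σ, by simpa [MulAut.conj_apply, mul_assoc] using h, by group⟩
  · rintro ⟨x, hx, rfl⟩
    simpa [MulAut.conj_apply, mul_assoc] using hx

/-- Gassmann equivalent subgroups of a finite group have the same normal core
(the intersection of all conjugates); consequently Gassmann equivalent intermediate
fields of a finite Galois extension `N/F` have the same Galois (normal) closure
over `F` inside `N`. -/
theorem normalCore_eq_of_gassmann_equiv :
    (∀ (G : Type) (_ : Group G) (_ : Finite G) (H H' : Subgroup G),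
      IsGassmannEquiv H H' →
        (⨅ σ : G, Subgroup.map (MulEquiv.toMonoidHom (MulAut.conj σ)) H) =
        (⨅ σ : G, Subgroup.map (MulEquiv.toMonoidHom (MulAut.conj σ)) H') ∧
        H.normalCore = H'.normalCore) ∧
    (∀ (F N : Type) (_ : Field F) (_ : Field N) (_ : Algebra F N)
      (_ : FiniteDimensional F N) (_ : IsGalois F N)
      (K L : IntermediateField F N),
      IsGassmannEquiv K.fixingSubgroup L.fixingSubgroup →
        IntermediateField.normalClosure F K N = IntermediateField.normalClosure F L N) := by
  constructor
  · intro G _ _ H H' hG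
    have hcore := normalCore_eq_of_gassmann hG
    exact ⟨by rw [iInf_conj_eq_normalCore, iInf_conj_eq_normalCore, hcore], hcore⟩
  · intro F N _ _ _ _ _ K L hG
    have key : ∀ M : IntermediateField F N,
        (IntermediateField.normalClosure F M N).fixingSubgroup = M.fixingSubgroup.normalCore := by
      intro M
      rw [IntermediateField.normalClosure_def'' M]
      rw [fixingSubgroup_iSup]
      have : ∀ σ : N ≃ₐ[F] N, (M.map (σ : N →ₐ[F] N)).fixingSubgroup =
          Subgroup.map (MulEquiv.toMonoidHom (MulAut.conj σ)) M.fixingSubgroup := by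
        intro σ
        rw [IsGalois.map_fixingSubgroup, conj_smul_eq_map]
      rw [iInf_congr this, iInf_conj_eq_normalCore]
    have hfix : (IntermediateField.normalClosure F K N).fixingSubgroup = (IntermediateField.normalClosure F L N).fixingSubgroup := by
      rw [key, key, normalCore_eq_of_gassmann hG]
    have := congrArg IntermediateField.fixedField hfix
    rwa [IsGalois.fixedField_fixingSubgroup, IsGalois.fixedField_fixingSubgroup] at this
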